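/- arXiv:1504.01291 — 4 statements merged into one kernel-verified Lean document; each statement's English description precedes it below -/
import Mathlib

section
/- The function h(x) = (λ β^α / Γ(α)) · (e^(-λx)/(1-e^(-λx))²) · (e^(-λx)/(1-e^(-λx)))^(α-1) · exp(-β e^(-λx)/(1-e^(-λx))) for x > 0 (and 0 otherwise) is a probability density function on ℝ, i.e., it is nonnegative and integrates to 1, for any α, β, λ > 0. -/
open Real MeasureTheory Set

/-- The (1-Exp)/Exp Gamma density is a probability density function on ℝ. -/
theorem stmt_2 (α β lam : ℝ) (hα : 0 < α) (hβ : 0 < β) (hlam : 0 < lam) :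
    (∀ x : ℝ, 0 ≤ (if 0 < x then
        lam * β ^ α / Real.Gamma α *
          (Real.exp (-lam * x) / (1 - Real.exp (-lam * x)) ^ 2) *
          (Real.exp (-lam * x) / (1 - Real.exp (-lam * x))) ^ (α - 1) *
          Real.exp (-β * (Real.exp (-lam * x) / (1 - Real.exp (-lam * x))))
        else 0)) ∧
    (∫ x : ℝ, (if 0 < x then
        lam * β ^ α / Real.Gamma α *
          (Real.exp (-lam * x) / (1 - Real.exp (-lam * x)) ^ 2) *
          (Real.exp (-lam * x) / (1 - Real.exp (-lam * x))) ^ (α - 1) *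
          Real.exp (-β * (Real.exp (-lam * x) / (1 - Real.exp (-lam * x))))
        else 0)) = 1 := by
  have hΓ : 0 < Real.Gamma α := Real.Gamma_pos_of_pos hα
  set F : ℝ → ℝ := fun x =>
      lam * β ^ α / Real.Gamma α *
        (Real.exp (-lam * x) / (1 - Real.exp (-lam * x)) ^ 2) *
        (Real.exp (-lam * x) / (1 - Real.exp (-lam * x))) ^ (α - 1) *
        Real.exp (-β * (Real.exp (-lam * x) / (1 - Real.exp (-lam * x)))) with hF
  have hsub : ∀ x : ℝ, 0 < x → 0 < 1 - Real.exp (-lam * x) := by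
    intro x hx
    have : Real.exp (-lam * x) < 1 := by
      rw [Real.exp_lt_one_iff]; nlinarith
    linarith
  have hnn : ∀ x : ℝ, 0 ≤ (if 0 < x then F x else 0) := by
    intro x
    split_ifs with hx
    · have h1 := hsub x hx
      have h2 : (0:ℝ) < Real.exp (-lam * x) := Real.exp_pos _
      have := hΓ
      rw [hF]
      positivity
    · exact le_refl 0
  refine ⟨hnn, ?_⟩
  -- the substitution map
  set f : ℝ → ℝ := fun x => Real.exp (-lam * x) / (1 - Real.exp (-lam * x)) with hf
  set f' : ℝ → ℝ := fun x => -(lam * Real.exp (-lam * x) / (1 - Real.exp (-lam * x)) ^ 2) with hf'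
  set g : ℝ → ℝ := fun u => β ^ α / Real.Gamma α * (u ^ (α - 1) * Real.exp (-(β * u))) with hg
  have hderiv : ∀ x ∈ Ioi (0:ℝ), HasDerivWithinAt f (f' x) (Ioi 0) x := by
    intro x hx
    have h1 := hsub x hx
    have d0 : HasDerivAt (fun x : ℝ => -lam * x) (-lam) x := by
      simpa using (hasDerivAt_id x).const_mul (-lam)
    have d1 : HasDerivAt (fun x : ℝ => Real.exp (-lam * x))
        (Real.exp (-lam * x) * -lam) x := d0.exp
    have d2 : HasDerivAt (fun x : ℝ => 1 - Real.exp (-lam * x))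
        (-(Real.exp (-lam * x) * -lam)) x := d1.const_sub 1
    have d3 := d1.div d2 h1.ne'
    have : HasDerivAt f (f' x) x := by
      refine d3.congr_deriv ?_
      rw [hf']
      field_simp
      ring
    exact this.hasDerivWithinAt
  have hinj : InjOn f (Ioi 0) := by
    intro x hx y hy hxy
    have h1 := hsub x hx
    have h2 := hsub y hy
    rw [hf] at hxy
    simp only [div_eq_div_iff h1.ne' h2.ne'] at hxy
    have : Real.exp (-lam * x) = Real.exp (-lam * y) := by nlinarith
    have := Real.exp_injective this
    have hl : lam ≠ 0 := hlam.ne'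
    nlinarith
  have himg : f '' Ioi 0 = Ioi 0 := by
    ext u
    constructor
    · rintro ⟨x, hx, rfl⟩
      have h1 := hsub x hx
      have h2 : (0:ℝ) < Real.exp (-lam * x) := Real.exp_pos _
      exact mem_Ioi.2 (div_pos h2 h1)
    · intro hu
      have hu' : (0:ℝ) < u := hu
      have hq : (0:ℝ) < u / (1 + u) := by positivity
      have hq1 : u / (1 + u) < 1 := by
        rw [div_lt_one (by linarith)]; linarith
      refine ⟨-(Real.log (u / (1 + u))) / lam, ?_, ?_⟩
      · have : Real.log (u / (1 + u)) < 0 := Real.log_neg hq hq1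
        exact mem_Ioi.2 (div_pos (neg_pos.2 this) hlam)
      · have he : Real.exp (-lam * (-(Real.log (u / (1 + u))) / lam)) = u / (1 + u) := by
          rw [show -lam * (-(Real.log (u / (1 + u))) / lam) = Real.log (u / (1 + u)) by
            field_simp]
          exact Real.exp_log hq
        rw [hf]
        simp only [he]
        field_simp
        ring
  have hind : (fun x : ℝ => if 0 < x then F x else 0) = (Ioi 0).indicator F := by
    funext x
    simp [Set.indicator_apply, Set.mem_Ioi]
  rw [hind, integral_indicator measurableSet_Ioi]
  have key := integral_image_eq_integral_abs_deriv_smul measurableSet_Ioi hderiv hinj g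
  rw [himg] at key
  have hcongr : ∫ x in Ioi (0:ℝ), F x = ∫ x in Ioi (0:ℝ), |f' x| • g (f x) := by
    apply setIntegral_congr_fun measurableSet_Ioi
    intro x hx
    have h1 := hsub x hx
    have h2 : (0:ℝ) < Real.exp (-lam * x) := Real.exp_pos _
    have habs : |f' x| = lam * Real.exp (-lam * x) / (1 - Real.exp (-lam * x)) ^ 2 := by
      rw [hf', abs_neg, abs_of_pos (by positivity)]
    show F x = |f' x| • g (f x)
    rw [smul_eq_mul, habs, hF, hg, hf]
    simp only []
    rw [neg_mul]
    ring
  rw [hcongr, ← key, hg]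
  simp only []
  rw [integral_const_mul, Real.integral_rpow_mul_exp_neg_mul_Ioi hα hβ]
  have h1 : (1 / β) ^ α * β ^ α = 1 := by
    rw [← Real.mul_rpow (by positivity) hβ.le, one_div_mul_cancel hβ.ne', Real.one_rpow]
  field_simp
  nlinarith [h1, hΓ]
end

section
/- For α, β, λ > 0 and x > 0, the density of the (1-Exp)/Exp Gamma distribution admits the absolutely convergent double-series expansion h(x) = ∑_{k=0}^∞ ∑_{j=0}^∞ C(-k-α-1, j) · ((-1)^(k+j) λ β^(k+α) / (k! Γ(α))) · e^(-λ(k+α+j)x), where C(-k-α-1, j) denotes the generalized binomial coefficient. -/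
open Real

/-- Generalized binomial coefficient C(r, j) = r(r-1)···(r-j+1)/j!. -/
noncomputable def genBinom (r : ℝ) (j : ℕ) : ℝ :=
  (∏ i ∈ Finset.range j, (r - i)) / (Nat.factorial j)

lemma hasSum_one_sub_rpow_neg (r u : ℝ) (hu0 : 0 ≤ u) (hu1 : u < 1) :
    HasSum (fun j : ℕ => (∏ i ∈ Finset.range j, (r + i)) / (Nat.factorial j) * u ^ j)
      ((1 - u) ^ (-r)) := by
  set f : ℂ → ℂ := fun z => (1 - z) ^ (-r : ℂ) with hfdef
  have hslit : ∀ z : ℂ, z ∈ Metric.ball (0 : ℂ) 1 → (1 - z) ∈ Complex.slitPlane := by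
    intro z hz
    rw [Metric.mem_ball, dist_zero_right] at hz
    left
    have h1 : z.re ≤ ‖z‖ := Complex.re_le_norm z
    simp only [Complex.sub_re, Complex.one_re]
    linarith
  have hdiff : DifferentiableOn ℂ f (Metric.ball (0 : ℂ) 1) := by
    apply DifferentiableOn.cpow
    · exact (differentiable_const (1:ℂ)).sub differentiable_id |>.differentiableOn
    · exact differentiableOn_const _
    · exact hslit
  have key : ∀ n : ℕ, ∀ z ∈ Metric.ball (0 : ℂ) 1,
      iteratedDeriv n f z
        = (∏ i ∈ Finset.range n, ((r : ℂ) + i)) * (1 - z) ^ (-(r : ℂ) - n) := by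
    intro n
    induction n with
    | zero => intro z hz; simp [f]
    | succ n ih =>
      intro z hz
      rw [iteratedDeriv_succ]
      have hev : iteratedDeriv n f =ᶠ[nhds z]
          fun w => (∏ i ∈ Finset.range n, ((r : ℂ) + i)) * (1 - w) ^ (-(r : ℂ) - n) := by
        filter_upwards [Metric.isOpen_ball.mem_nhds hz] with w hw using ih w hw
      rw [hev.deriv_eq]
      have h1 : HasDerivAt (fun w : ℂ => 1 - w) (-1) z := by
        simpa using (hasDerivAt_id z).const_sub (1:ℂ)
      have h2 : HasDerivAt (fun w : ℂ => (1 - w) ^ (-(r : ℂ) - n))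
          ((-(r : ℂ) - n) * (1 - z) ^ (-(r : ℂ) - n - 1) * (-1)) z :=
        h1.cpow_const (hslit z hz)
      rw [(h2.const_mul (∏ i ∈ Finset.range n, ((r : ℂ) + i))).deriv]
      have hexp : (-(r : ℂ) - n - 1) = -(r : ℂ) - (n + 1 : ℕ) := by push_cast; ring
      rw [hexp, Finset.prod_range_succ]
      push_cast
      ring
  have hu : (u : ℂ) ∈ Metric.ball (0 : ℂ) 1 := by
    rw [Metric.mem_ball, dist_zero_right]
    simpa [Complex.norm_real, abs_of_nonneg hu0] using hu1
  have H := Complex.hasSum_taylorSeries_on_ball hdiff hu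
  have h00 : (0 : ℂ) ∈ Metric.ball (0 : ℂ) 1 := by simp
  have hiter : ∀ n : ℕ, iteratedDeriv n f 0 = ∏ i ∈ Finset.range n, ((r : ℂ) + i) := by
    intro n
    rw [key n 0 h00]
    simp
  have hfu : f (u : ℂ) = ((((1 - u) ^ (-r) : ℝ)) : ℂ) := by
    rw [hfdef]
    show ((1 : ℂ) - (u : ℂ)) ^ (-(r : ℂ)) = _
    rw [show ((1 : ℂ) - (u : ℂ)) = (((1 - u : ℝ)) : ℂ) by push_cast; ring,
      show (-(r : ℂ)) = (((-r : ℝ)) : ℂ) by push_cast; ring,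
      ← Complex.ofReal_cpow (by linarith)]
  have hfun : (fun n : ℕ =>
        ((((∏ i ∈ Finset.range n, (r + i)) / (Nat.factorial n) * u ^ n : ℝ)) : ℂ))
      = fun n : ℕ => (n.factorial : ℂ)⁻¹ • ((u : ℂ) - 0) ^ n • iteratedDeriv n f 0 := by
    funext n
    rw [hiter n, smul_eq_mul, smul_eq_mul]
    push_cast
    ring
  rw [hfu] at H
  rw [← hfun] at H
  exact Complex.hasSum_ofReal.mp H

lemma hasSum_exp_real (w : ℝ) : HasSum (fun k : ℕ => w ^ k / (Nat.factorial k)) (Real.exp w) := by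
  rw [Real.exp_eq_exp_ℝ]
  exact NormedSpace.expSeries_div_hasSum_exp w

set_option maxHeartbeats 1000000 in
/-- The (1-Exp)/Exp Gamma density admits an absolutely convergent
double-series expansion. -/
theorem stmt_7 (α β lam x : ℝ) (hα : 0 < α) (hβ : 0 < β) (hlam : 0 < lam)
    (hx : 0 < x) :
    Summable (fun p : ℕ × ℕ =>
      |genBinom (-(p.1 : ℝ) - α - 1) p.2 *
        ((-1) ^ (p.1 + p.2) * lam * β ^ ((p.1 : ℝ) + α) /
          (Nat.factorial p.1 * Real.Gamma α)) *
        Real.exp (-lam * ((p.1 : ℝ) + α + p.2) * x)|) ∧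
    HasSum (fun p : ℕ × ℕ =>
      genBinom (-(p.1 : ℝ) - α - 1) p.2 *
        ((-1) ^ (p.1 + p.2) * lam * β ^ ((p.1 : ℝ) + α) /
          (Nat.factorial p.1 * Real.Gamma α)) *
        Real.exp (-lam * ((p.1 : ℝ) + α + p.2) * x))
      (lam * β ^ α / Real.Gamma α *
        (Real.exp (-lam * x) / (1 - Real.exp (-lam * x)) ^ 2) *
        (Real.exp (-lam * x) / (1 - Real.exp (-lam * x))) ^ (α - 1) *
        Real.exp (-β * (Real.exp (-lam * x) / (1 - Real.exp (-lam * x))))) := by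
  have hΓ : 0 < Real.Gamma α := Real.Gamma_pos_of_pos hα
  set u : ℝ := Real.exp (-lam * x) with hu_def
  have hu0 : 0 < u := Real.exp_pos _
  have hu1 : u < 1 := by
    rw [hu_def]
    exact Real.exp_lt_one_iff.mpr (by nlinarith)
  have hv : 0 < 1 - u := by linarith
  set E : ℝ := lam * β ^ α * u ^ α / Real.Gamma α with hE
  have hE0 : 0 < E := by rw [hE]; positivity
  set D : ℕ → ℝ := fun k =>
    E * (-(β * u)) ^ k / (Nat.factorial k) with hD
  set c : ℕ → ℕ → ℝ := fun k j =>
    (∏ i ∈ Finset.range j, (((k : ℝ) + α + 1) + i)) / (Nat.factorial j) * u ^ j with hc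
  have hcnn : ∀ k j, 0 ≤ c k j := by
    intro k j
    simp only [hc]
    refine mul_nonneg (div_nonneg ?_ (by positivity)) (by positivity)
    refine Finset.prod_nonneg fun i _ => ?_
    have h1 : (0:ℝ) ≤ (k:ℝ) := Nat.cast_nonneg k
    have h2 : (0:ℝ) ≤ (i:ℝ) := Nat.cast_nonneg i
    nlinarith
  -- rewrite of general term
  have hterm : ∀ p : ℕ × ℕ,
      genBinom (-(p.1 : ℝ) - α - 1) p.2 *
        ((-1) ^ (p.1 + p.2) * lam * β ^ ((p.1 : ℝ) + α) /
          (Nat.factorial p.1 * Real.Gamma α)) *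
        Real.exp (-lam * ((p.1 : ℝ) + α + p.2) * x) = D p.1 * c p.1 p.2 := by
    rintro ⟨k, j⟩
    simp only [genBinom, hD, hc, hE]
    have e1 : (∏ i ∈ Finset.range j, ((-(k:ℝ) - α - 1) - i))
        = (-1 : ℝ) ^ j * ∏ i ∈ Finset.range j, (((k:ℝ) + α + 1) + i) := by
      rw [show (∏ i ∈ Finset.range j, ((-(k:ℝ) - α - 1) - i))
          = ∏ i ∈ Finset.range j, ((-1 : ℝ) * (((k:ℝ) + α + 1) + i)) from
        Finset.prod_congr rfl (fun i _ => by ring),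
        Finset.prod_mul_distrib, Finset.prod_const, Finset.card_range]
    have e2 : Real.exp (-lam * ((k:ℝ) + α + (j:ℝ)) * x) = u ^ k * u ^ α * u ^ j := by
      have h0 : Real.exp (-lam * ((k:ℝ) + α + (j:ℝ)) * x) = u ^ ((k:ℝ) + α + (j:ℝ)) := by
        rw [hu_def, Real.rpow_def_of_pos (Real.exp_pos _), Real.log_exp]
        congr 1
        ring
      rw [h0, Real.rpow_add hu0 ((k:ℝ) + α) (j:ℝ), Real.rpow_add hu0 (k:ℝ) α,
        Real.rpow_natCast, Real.rpow_natCast]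
    have e3 : β ^ ((k:ℝ) + α) = β ^ k * β ^ α := by
      rw [Real.rpow_add hβ, Real.rpow_natCast]
    have e4 : ((-1 : ℝ)) ^ (k + j) = (-1) ^ k * (-1) ^ j := pow_add _ _ _
    have e5 : (-(β * u)) ^ k = (-1 : ℝ) ^ k * (β ^ k * u ^ k) := by
      rw [neg_pow, mul_pow]
    have e6 : ((-1 : ℝ)) ^ j * ((-1 : ℝ)) ^ j = 1 := by
      rw [← mul_pow]; norm_num
    rw [e1, e2, e3, e4, e5]
    field_simp
    linear_combination e6
  -- row sums
  have hsplit : ∀ k : ℕ, (1 - u) ^ (-((k:ℝ) + α + 1))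
      = (1 - u) ^ (-α - 1) * ((1 - u)⁻¹) ^ k := by
    intro k
    rw [show -((k:ℝ) + α + 1) = (-α - 1) + (-(k:ℝ)) by ring, Real.rpow_add hv,
      Real.rpow_neg hv.le, Real.rpow_natCast, inv_pow]
  have hrow : ∀ k : ℕ, HasSum (fun j => c k j) ((1 - u) ^ (-((k:ℝ) + α + 1))) := by
    intro k
    simpa only [hc] using hasSum_one_sub_rpow_neg ((k:ℝ) + α + 1) u hu0.le hu1
  -- the outer sums (generic in q)
  have hkey : ∀ q : ℝ, HasSum (fun k : ℕ =>
      E * q ^ k / (Nat.factorial k) * ((1 - u) ^ (-((k:ℝ) + α + 1))))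
      (E * (1 - u) ^ (-α - 1) * Real.exp (q / (1 - u))) := by
    intro q
    have h1 := (hasSum_exp_real (q * (1 - u)⁻¹)).mul_left (E * (1 - u) ^ (-α - 1))
    have h2 : Real.exp (q * (1 - u)⁻¹) = Real.exp (q / (1 - u)) := by
      rw [div_eq_mul_inv]
    rw [h2] at h1
    refine h1.congr_fun fun k => ?_
    rw [hsplit k, mul_pow]
    ring
  have hDabs : ∀ k, |D k| = E * (β * u) ^ k / (Nat.factorial k) := by
    intro k
    simp only [hD]
    rw [abs_div, abs_mul, abs_pow, abs_neg, abs_of_pos hE0,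
      abs_of_pos (show (0:ℝ) < β * u by positivity),
      abs_of_pos (show (0:ℝ) < ((Nat.factorial k : ℝ)) by positivity)]
  -- summability of absolute values
  have habs : (fun p : ℕ × ℕ =>
      |genBinom (-(p.1 : ℝ) - α - 1) p.2 *
        ((-1) ^ (p.1 + p.2) * lam * β ^ ((p.1 : ℝ) + α) /
          (Nat.factorial p.1 * Real.Gamma α)) *
        Real.exp (-lam * ((p.1 : ℝ) + α + p.2) * x)|)
      = fun p : ℕ × ℕ => |D p.1| * c p.1 p.2 := by
    funext p
    rw [hterm p, abs_mul, abs_of_nonneg (hcnn p.1 p.2)]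
  have hsummable : Summable (fun p : ℕ × ℕ =>
      |genBinom (-(p.1 : ℝ) - α - 1) p.2 *
        ((-1) ^ (p.1 + p.2) * lam * β ^ ((p.1 : ℝ) + α) /
          (Nat.factorial p.1 * Real.Gamma α)) *
        Real.exp (-lam * ((p.1 : ℝ) + α + p.2) * x)|) := by
    rw [habs]
    refine (summable_prod_of_nonneg ?_).mpr ⟨?_, ?_⟩
    · intro p
      exact mul_nonneg (abs_nonneg _) (hcnn p.1 p.2)
    · intro k
      simpa using ((hrow k).mul_left (|D k|)).summable
    · have hts : ∀ k : ℕ, ∑' j, |D k| * c k j = |D k| * (1 - u) ^ (-((k:ℝ) + α + 1)) :=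
        fun k => ((hrow k).mul_left _).tsum_eq
      simp only []
      simp only [hts]
      refine ((hkey (β * u)).congr_fun fun k => ?_).summable
      rw [hDabs k]
  refine ⟨hsummable, ?_⟩
  -- the signed sum
  have hg : Summable (fun p : ℕ × ℕ =>
      genBinom (-(p.1 : ℝ) - α - 1) p.2 *
        ((-1) ^ (p.1 + p.2) * lam * β ^ ((p.1 : ℝ) + α) /
          (Nat.factorial p.1 * Real.Gamma α)) *
        Real.exp (-lam * ((p.1 : ℝ) + α + p.2) * x)) := hsummable.of_abs
  have Hg := hg.hasSum
  have hrow' : ∀ k : ℕ, HasSum (fun j =>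
      genBinom (-(k : ℝ) - α - 1) j *
        ((-1) ^ (k + j) * lam * β ^ ((k : ℝ) + α) /
          (Nat.factorial k * Real.Gamma α)) *
        Real.exp (-lam * ((k : ℝ) + α + j) * x))
      (D k * (1 - u) ^ (-((k:ℝ) + α + 1))) := by
    intro k
    refine ((hrow k).mul_left (D k)).congr_fun fun j => ?_
    exact hterm (k, j)
  have Hfib := Hg.prod_fiberwise hrow'
  have Htot : HasSum (fun k : ℕ => D k * (1 - u) ^ (-((k:ℝ) + α + 1)))
      (E * (1 - u) ^ (-α - 1) * Real.exp (-(β * u) / (1 - u))) := by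
    refine (hkey (-(β * u))).congr_fun fun k => ?_
    simp only [hD]
  have htsum_eq := Hfib.unique Htot
  rw [htsum_eq] at Hg
  convert Hg using 1
  -- identify the closed forms
  have hexp_eq : Real.exp (-β * (u / (1 - u))) = Real.exp (-(β * u) / (1 - u)) := by
    congr 1
    ring
  rw [hexp_eq, hE]
  have h7 : u ^ α = u ^ (1:ℝ) * u ^ (α - 1) := by
    rw [← Real.rpow_add hu0]
    norm_num
  have h8 : (u / (1 - u)) ^ (α - 1) = u ^ (α - 1) / (1 - u) ^ (α - 1) :=
    Real.div_rpow hu0.le hv.le _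
  have h9 : (1 - u) ^ (-α - 1) = ((1 - u) ^ (α - 1) * (1 - u) ^ (2:ℕ))⁻¹ := by
    rw [show ((1 - u):ℝ) ^ (2:ℕ) = (1 - u) ^ ((2:ℕ):ℝ) from (Real.rpow_natCast _ 2).symm,
      ← Real.rpow_add hv, ← Real.rpow_neg hv.le]
    norm_num
    ring_nf
  have hne1 : (1 - u) ^ (α - 1) ≠ 0 := (Real.rpow_pos_of_pos hv _).ne'
  have hne2 : ((1 - u):ℝ) ^ (2:ℕ) ≠ 0 := pow_ne_zero _ hv.ne'
  rw [h7, h8, h9, Real.rpow_one]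
  field_simp
end

section
/- For α, β, λ > 0 and any natural number m, the m-th moment of the (1-Exp)/Exp Gamma distribution is finite, i.e., ∫_0^∞ x^m h(x) dx < ∞. -/
open Real MeasureTheory Set Filter

lemma aux_bdd_9 (α β : ℝ) (hα : 0 < α) (hβ : 0 < β) :
    ∃ C : ℝ, 0 ≤ C ∧ ∀ u : ℝ, 0 ≤ u →
      u ^ α * ((1 + u) * Real.exp (-β * u)) ≤ C := by
  set g : ℝ → ℝ := fun u => u ^ α * ((1 + u) * Real.exp (-β * u)) with hg
  have h1 := tendsto_rpow_mul_exp_neg_mul_atTop_nhds_zero α β hβ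
  have h2 := tendsto_rpow_mul_exp_neg_mul_atTop_nhds_zero (α + 1) β hβ
  have h3 : Tendsto g atTop (nhds 0) := by
    have h4 := h1.add h2
    rw [add_zero] at h4
    refine Tendsto.congr' ?_ h4
    filter_upwards [eventually_gt_atTop (0:ℝ)] with u hu
    rw [hg]
    simp only
    rw [Real.rpow_add_one hu.ne' α]
    ring
  obtain ⟨M, hM⟩ := (h3.eventually_lt_const one_pos).exists_forall_of_atTop
  have hgc : Continuous g := by
    have hc : Continuous fun u : ℝ => u ^ α := by
      rw [continuous_iff_continuousAt]
      intro u
      exact Real.continuousAt_rpow_const u α (Or.inr hα.le)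
    fun_prop
  obtain ⟨C, hC⟩ := (isCompact_Icc (a := (0:ℝ)) (b := M)).exists_bound_of_continuousOn
    hgc.continuousOn
  refine ⟨max C 1, le_trans zero_le_one (le_max_right _ _), fun u hu => ?_⟩
  rcases le_total u M with h | h
  · exact le_trans (le_abs_self _) (le_trans (hC u ⟨hu, h⟩) (le_max_left _ _))
  · exact le_trans (hM u h).le (le_max_right _ _)

lemma aux_alg_9 (α e E : ℝ) (he : 0 < e) (hd : 0 < 1 - e) :
    e / (1 - e) ^ 2 * (e / (1 - e)) ^ (α - 1) * E
      = (e / (1 - e)) ^ α * ((1 + e / (1 - e)) * E) := by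
  have hq : 0 < e / (1 - e) := div_pos he hd
  have e0 : 1 + e / (1 - e) = 1 / (1 - e) := by field_simp; ring
  have e1 : e / (1 - e) ^ 2 = e / (1 - e) * (1 + e / (1 - e)) := by
    rw [e0, div_mul_div_comm, mul_one, sq]
  have e2 : e / (1 - e) * (e / (1 - e)) ^ (α - 1) = (e / (1 - e)) ^ α := by
    nth_rewrite 1 [← Real.rpow_one (e / (1 - e))]
    rw [← Real.rpow_add hq]
    norm_num
  rw [e1, show e / (1 - e) * (1 + e / (1 - e)) * (e / (1 - e)) ^ (α - 1) * E
      = e / (1 - e) * (e / (1 - e)) ^ (α - 1) * ((1 + e / (1 - e)) * E) by ring, e2]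

/-- Every moment of the (1-Exp)/Exp Gamma distribution is finite. -/
theorem stmt_9 (α β lam : ℝ) (m : ℕ) (hα : 0 < α) (hβ : 0 < β)
    (hlam : 0 < lam) :
    IntegrableOn (fun x : ℝ => x ^ m *
      (lam * β ^ α / Real.Gamma α *
        (Real.exp (-lam * x) / (1 - Real.exp (-lam * x)) ^ 2) *
        (Real.exp (-lam * x) / (1 - Real.exp (-lam * x))) ^ (α - 1) *
        Real.exp (-β * (Real.exp (-lam * x) / (1 - Real.exp (-lam * x))))))
      (Ioi 0) := by
  obtain ⟨C, hC0, hC⟩ := aux_bdd_9 α β hα hβ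
  set K : ℝ := lam * β ^ α / Real.Gamma α with hKdef
  have hK0 : 0 < K := div_pos (mul_pos hlam (Real.rpow_pos_of_pos hβ α))
    (Real.Gamma_pos_of_pos hα)
  set Q : ℝ → ℝ := fun x => Real.exp (-lam * x) / (1 - Real.exp (-lam * x)) with hQ
  set G : ℝ → ℝ := fun x =>
    K * (x ^ m * (Q x ^ α * ((1 + Q x) * Real.exp (-β * Q x)))) with hG
  -- positivity facts
  have hd : ∀ x : ℝ, 0 < x → 0 < 1 - Real.exp (-lam * x) := by
    intro x hx
    rw [sub_pos]
    exact Real.exp_lt_one_iff.mpr (by nlinarith)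
  have hQpos : ∀ x : ℝ, 0 < x → 0 < Q x := fun x hx =>
    div_pos (Real.exp_pos _) (hd x hx)
  have hGnn : ∀ x : ℝ, 0 < x → 0 ≤ G x := by
    intro x hx
    have h1 := hQpos x hx
    refine mul_nonneg hK0.le (mul_nonneg (pow_nonneg hx.le m)
      (mul_nonneg (Real.rpow_nonneg h1.le α)
        (mul_nonneg (by linarith) (Real.exp_pos _).le)))
  -- the integrand equals G on Ioi 0
  have key : EqOn G (fun x : ℝ => x ^ m *
      (K * (Real.exp (-lam * x) / (1 - Real.exp (-lam * x)) ^ 2) *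
        (Real.exp (-lam * x) / (1 - Real.exp (-lam * x))) ^ (α - 1) *
        Real.exp (-β * (Real.exp (-lam * x) / (1 - Real.exp (-lam * x)))))) (Ioi 0) := by
    intro x hx
    have h := aux_alg_9 α (Real.exp (-lam * x))
      (Real.exp (-β * (Real.exp (-lam * x) / (1 - Real.exp (-lam * x)))))
      (Real.exp_pos _) (hd x hx)
    rw [hG, hQ]
    simp only
    rw [show x ^ m * (K * (Real.exp (-lam * x) / (1 - Real.exp (-lam * x)) ^ 2) *
        (Real.exp (-lam * x) / (1 - Real.exp (-lam * x))) ^ (α - 1) *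
        Real.exp (-β * (Real.exp (-lam * x) / (1 - Real.exp (-lam * x))))) =
      K * (x ^ m * (Real.exp (-lam * x) / (1 - Real.exp (-lam * x)) ^ 2 *
        (Real.exp (-lam * x) / (1 - Real.exp (-lam * x))) ^ (α - 1) *
        Real.exp (-β * (Real.exp (-lam * x) / (1 - Real.exp (-lam * x)))))) by ring, h]
  -- continuity of G on Ioi 0
  have hcont : ContinuousOn G (Ioi 0) := by
    intro x hx
    apply ContinuousAt.continuousWithinAt
    have hdx : (0:ℝ) < 1 - Real.exp (-lam * x) := hd x hx
    have hE : ContinuousAt (fun y : ℝ => Real.exp (-lam * y)) x := by fun_prop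
    have hD : ContinuousAt (fun y : ℝ => 1 - Real.exp (-lam * y)) x := by fun_prop
    have hq : ContinuousAt Q x := hE.div hD hdx.ne'
    have hr : ContinuousAt (fun y : ℝ => Q y ^ α) x :=
      hq.rpow_const (Or.inl (hQpos x hx).ne')
    have hone : ContinuousAt (fun y : ℝ => 1 + Q y) x := continuousAt_const.add hq
    have hex : ContinuousAt (fun y : ℝ => Real.exp (-β * Q y)) x :=
      Real.continuous_exp.continuousAt.comp (continuousAt_const.mul hq)
    exact continuousAt_const.mul (((continuous_pow m).continuousAt).mul
      (hr.mul (hone.mul hex)))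
  -- integrable on (0, 1]
  have h1 : IntegrableOn G (Ioc 0 1) := by
    refine ⟨(hcont.mono Ioc_subset_Ioi_self).aestronglyMeasurable measurableSet_Ioc,
      HasFiniteIntegral.restrict_of_bounded (C := K * C) measure_Ioc_lt_top ?_⟩
    filter_upwards [ae_restrict_mem measurableSet_Ioc] with x hx
    have hx0 : (0:ℝ) < x := hx.1
    rw [Real.norm_eq_abs, abs_of_nonneg (hGnn x hx0), hG]
    simp only
    have hb := hC (Q x) (hQpos x hx0).le
    have hxm : x ^ m ≤ 1 := pow_le_one₀ hx0.le hx.2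
    have hnn : 0 ≤ Q x ^ α * ((1 + Q x) * Real.exp (-β * Q x)) :=
      mul_nonneg (Real.rpow_nonneg (hQpos x hx0).le α)
        (mul_nonneg (by linarith [hQpos x hx0]) (Real.exp_pos _).le)
    calc K * (x ^ m * (Q x ^ α * ((1 + Q x) * Real.exp (-β * Q x))))
        ≤ K * (1 * C) := by
          apply mul_le_mul_of_nonneg_left _ hK0.le
          exact mul_le_mul hxm hb hnn zero_le_one
      _ = K * C := by ring
  -- integrable on (1, ∞)
  have hc : (0:ℝ) < 1 - Real.exp (-lam) := by
    rw [sub_pos]; exact Real.exp_lt_one_iff.mpr (by linarith)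
  set c : ℝ := 1 - Real.exp (-lam) with hcdef
  set cα : ℝ := c ^ α with hcα
  have hcα0 : 0 < cα := Real.rpow_pos_of_pos hc α
  set D : ℝ := K * ((1 + Real.exp (-lam) / c) / cα) with hD
  have h2 : IntegrableOn G (Ioi 1) := by
    have hbase : IntegrableOn (fun x : ℝ => x ^ (m:ℝ) * Real.exp (-(lam * α) * x))
        (Ioi 0) := by
      have := integrableOn_rpow_mul_exp_neg_mul_rpow (p := 1) (s := (m:ℝ))
        (b := lam * α) (neg_one_lt_zero.trans_le (Nat.cast_nonneg m)) one_pos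
        (mul_pos hlam hα)
      exact this.congr_fun (fun x _ => by simp only [Real.rpow_one]) measurableSet_Ioi
    have hgint : IntegrableOn
        (fun x : ℝ => D * (x ^ (m:ℝ) * Real.exp (-(lam * α) * x))) (Ioi 1) :=
      (hbase.mono_set (Ioi_subset_Ioi zero_le_one)).const_mul D
    refine Integrable.mono' hgint
      ((hcont.mono (Ioi_subset_Ioi zero_le_one)).aestronglyMeasurable measurableSet_Ioi) ?_
    filter_upwards [ae_restrict_mem measurableSet_Ioi] with x hx
    have hx1 : (1:ℝ) < x := hx
    have hx0 : (0:ℝ) < x := lt_trans one_pos hx1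
    have hdx := hd x hx0
    have hQx := hQpos x hx0
    have he_le : Real.exp (-lam * x) ≤ Real.exp (-lam) :=
      Real.exp_le_exp.mpr (by nlinarith)
    have hd_ge : c ≤ 1 - Real.exp (-lam * x) := by rw [hcdef]; linarith
    have hQle : Q x ≤ Real.exp (-lam * x) / c :=
      div_le_div_of_nonneg_left (Real.exp_pos _).le hc hd_ge
    have hQα : Q x ^ α ≤ Real.exp (-(lam * α) * x) / cα := by
      calc Q x ^ α ≤ (Real.exp (-lam * x) / c) ^ α :=
            Real.rpow_le_rpow hQx.le hQle hα.le
        _ = Real.exp (-(lam * α) * x) / cα := by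
            rw [hcα, Real.div_rpow (Real.exp_pos _).le hc.le, ← Real.exp_mul,
              show -lam * x * α = -(lam * α) * x by ring]
    have h1u : 1 + Q x ≤ 1 + Real.exp (-lam) / c := by
      have : Q x ≤ Real.exp (-lam) / c :=
        le_trans hQle (by gcongr)
      linarith
    have hE1 : Real.exp (-β * Q x) ≤ 1 :=
      Real.exp_le_one_iff.mpr (by nlinarith)
    rw [Real.norm_eq_abs, abs_of_nonneg (hGnn x hx0), hG, Real.rpow_natCast]
    simp only
    have hmain : Q x ^ α * ((1 + Q x) * Real.exp (-β * Q x)) ≤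
        Real.exp (-(lam * α) * x) / cα * ((1 + Real.exp (-lam) / c) * 1) := by
      apply mul_le_mul hQα
      · apply mul_le_mul h1u hE1 (Real.exp_pos _).le (by positivity)
      · exact mul_nonneg (by linarith) (Real.exp_pos _).le
      · exact div_nonneg (Real.exp_pos _).le hcα0.le
    calc K * (x ^ m * (Q x ^ α * ((1 + Q x) * Real.exp (-β * Q x))))
        ≤ K * (x ^ m * (Real.exp (-(lam * α) * x) / cα * ((1 + Real.exp (-lam) / c) * 1))) :=
          mul_le_mul_of_nonneg_left
            (mul_le_mul_of_nonneg_left hmain (pow_nonneg hx0.le m)) hK0.le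
      _ = D * (x ^ m * Real.exp (-(lam * α) * x)) := by rw [hD]; ring
  have hunion : IntegrableOn G (Ioi 0) := by
    rw [← Ioc_union_Ioi_eq_Ioi (zero_le_one (α := ℝ))]
    exact h1.union h2
  exact hunion.congr_fun key measurableSet_Ioi
end

section
/- The quantile function of the (1-Exp)/Exp Gamma distribution is given by Q(p) = (1/λ)·log(1 + 1/Q_Γ(1-p)) for p ∈ (0,1), where Q_Γ is the quantile function of the Gamma(α, β) distribution; that is, H(Q(p)) = p for all p ∈ (0,1), for α, β, λ > 0. -/
open Real MeasureTheory Set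

/-- The quantile function of the (1-Exp)/Exp Gamma distribution:
Q(p) = (1/λ)·log(1 + 1/Q_Γ(1-p)) satisfies H(Q(p)) = p. -/
theorem stmt_19 (α β lam : ℝ) (QΓ : ℝ → ℝ) (hα : 0 < α) (hβ : 0 < β)
    (hlam : 0 < lam)
    (hQΓ : ∀ u ∈ Ioo (0:ℝ) 1, 0 < QΓ u ∧
      (∫ s in Ioc (0:ℝ) (QΓ u),
        β ^ α / Real.Gamma α * s ^ (α - 1) * Real.exp (-β * s)) = u) :
    ∀ p ∈ Ioo (0:ℝ) 1,
      (∫ t in Ioi (Real.exp (-lam * ((1 / lam) * Real.log (1 + 1 / QΓ (1 - p)))) /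
            (1 - Real.exp (-lam * ((1 / lam) * Real.log (1 + 1 / QΓ (1 - p)))))),
          β ^ α / Real.Gamma α * t ^ (α - 1) * Real.exp (-β * t)) = p := by
  intro p hp
  have h1p : (1 - p) ∈ Ioo (0:ℝ) 1 := ⟨by linarith [hp.2], by linarith [hp.1]⟩
  obtain ⟨hq0, hint⟩ := hQΓ (1 - p) h1p
  set q := QΓ (1 - p) with hqdef
  set f : ℝ → ℝ := fun s => β ^ α / Real.Gamma α * s ^ (α - 1) * Real.exp (-β * s) with hf
  have h1q : (0:ℝ) < 1 + 1/q := by positivity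
  have hlb : Real.exp (-lam * ((1 / lam) * Real.log (1 + 1 / q))) /
      (1 - Real.exp (-lam * ((1 / lam) * Real.log (1 + 1 / q)))) = q := by
    have harg : -lam * ((1 / lam) * Real.log (1 + 1 / q)) = - Real.log (1 + 1/q) := by
      field_simp
    rw [harg, Real.exp_neg, Real.exp_log h1q]
    rw [div_eq_iff]
    · field_simp
      ring
    · have : (1 + 1/q)⁻¹ < 1 := by
        rw [inv_lt_one_iff₀]; right; simp [hq0]
      linarith
  rw [hlb]
  have hInt : MeasureTheory.IntegrableOn f (Ioi 0) := by
    have h1 := integrableOn_rpow_mul_exp_neg_mul_rpow (s := α - 1) (p := 1) (b := β)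
      (by linarith) zero_lt_one hβ
    have h2 : MeasureTheory.IntegrableOn
        (fun x : ℝ => x ^ (α-1) * Real.exp (-β * x)) (Ioi 0) := by
      apply h1.congr_fun ?_ measurableSet_Ioi
      intro x hx
      simp [Real.rpow_one]
    have h3 := h2.const_mul (β ^ α / Real.Gamma α)
    simpa [hf, mul_assoc, MeasureTheory.IntegrableOn] using h3
  have hΓ : (0:ℝ) < Real.Gamma α := Real.Gamma_pos_of_pos hα
  have htotal : ∫ s in Ioi (0:ℝ), f s = 1 := by
    simp_rw [hf, mul_assoc, neg_mul]
    rw [MeasureTheory.integral_const_mul, Real.integral_rpow_mul_exp_neg_mul_Ioi hα hβ,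
      one_div, ← Real.rpow_neg_one β, ← Real.rpow_mul hβ.le]
    have hβα : (0:ℝ) < β ^ α := Real.rpow_pos_of_pos hβ α
    have : ((-1:ℝ) * α) = -α := by ring
    rw [this, Real.rpow_neg hβ.le]
    field_simp
  have hdisj : Disjoint (Ioc (0:ℝ) q) (Ioi q) := Ioc_disjoint_Ioi le_rfl
  have hsplit : (∫ s in Ioc (0:ℝ) q, f s) + (∫ s in Ioi q, f s) = ∫ s in Ioi (0:ℝ), f s := by
    rw [← MeasureTheory.setIntegral_union hdisj measurableSet_Ioi
      (hInt.mono_set Ioc_subset_Ioi_self) (hInt.mono_set (Ioi_subset_Ioi hq0.le)),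
      Ioc_union_Ioi_eq_Ioi hq0.le]
  have : (∫ s in Ioi q, f s) = p := by
    have h1 : (∫ s in Ioc (0:ℝ) q, f s) = 1 - p := hint
    linarith [hsplit, htotal, h1]
  exact this
end
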